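/- Let λ > 0 and θ ∈ (0,π) be real numbers. Define f₀ : ℝ² → ℝ² by f₀(x,y) = (−2λy(x²+y²) − 2y(2x²+y²), 4λx(x²+y²) + 2x(2x²+y²)) and let f_θ(x,y) = (cos(θ)·f₀₁(x,y) − sin(θ)·f₀₂(x,y), sin(θ)·f₀₁(x,y) + cos(θ)·f₀₂(x,y)) be the rotation of f₀ by angle θ. Then the function W(x,y) = (2x²+y²)^λ (x²+y²) satisfies ⟨∇W(x,y), f_θ(x,y)⟩ = −sin(θ)·(2x²+y²)^{λ−1}·(f₀₁(x,y)² + f₀₂(x,y)²) < 0 for all (x,y) ≠ (0,0). In particular, W is positive definite with negative definite derivative along the homogeneous cubic vector field f_θ, proving its asymptotic stability. -/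

import Mathlib

open RealInnerProductSpace Real

private lemma grad_aux (lam : ℝ)
    (W : EuclideanSpace ℝ (Fin 2) → ℝ)
    (hW : ∀ p : EuclideanSpace ℝ (Fin 2),
      W p = (2*(p 0)^2+(p 1)^2) ^ lam * ((p 0)^2+(p 1)^2))
    (p : EuclideanSpace ℝ (Fin 2)) (hp : p ≠ 0) :
    HasGradientAt W
      (!₂[((2*(p 0)^2+(p 1)^2) ^ (lam-1)) * (4*lam*(p 0)*((p 0)^2+(p 1)^2) + 2*(p 0)*(2*(p 0)^2+(p 1)^2)),
         ((2*(p 0)^2+(p 1)^2) ^ (lam-1)) * (2*lam*(p 1)*((p 0)^2+(p 1)^2) + 2*(p 1)*(2*(p 0)^2+(p 1)^2))] :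
        EuclideanSpace ℝ (Fin 2)) p := by
  have hx0 : (p 0 ≠ 0 ∨ p 1 ≠ 0) := by
    by_contra h
    push_neg at h
    exact hp (by ext i; fin_cases i <;> simp [h.1, h.2])
  have hA : 0 < 2*(p 0)^2+(p 1)^2 := by
    rcases hx0 with h | h <;> positivity
  have h0 := (EuclideanSpace.proj (𝕜 := ℝ) (0 : Fin 2)).hasFDerivAt (x := p)
  have h1 := (EuclideanSpace.proj (𝕜 := ℝ) (1 : Fin 2)).hasFDerivAt (x := p)
  have hproj0 : HasFDerivAt (𝕜 := ℝ) (E := EuclideanSpace ℝ (Fin 2)) (F := ℝ)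
      (fun q => q 0) (EuclideanSpace.proj (𝕜 := ℝ) (0 : Fin 2)) p := h0
  have hproj1 : HasFDerivAt (𝕜 := ℝ) (E := EuclideanSpace ℝ (Fin 2)) (F := ℝ)
      (fun q => q 1) (EuclideanSpace.proj (𝕜 := ℝ) (1 : Fin 2)) p := h1
  have hAeq : HasFDerivAt (fun q : EuclideanSpace ℝ (Fin 2) => 2*(q 0)^2+(q 1)^2)
      ((4 * p 0) • EuclideanSpace.proj (𝕜 := ℝ) (0 : Fin 2) + (2 * p 1) • EuclideanSpace.proj (𝕜 := ℝ) (1 : Fin 2)) p := by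
    have h1 := (hproj0.mul hproj0).const_mul (2:ℝ)
    have h2 := hproj1.mul hproj1
    have h3 := (h1.add h2).congr_of_eventuallyEq
      (f₁ := fun q : EuclideanSpace ℝ (Fin 2) => 2*(q 0)^2+(q 1)^2)
      (Filter.Eventually.of_forall (fun q => by simp only [Pi.add_apply, Pi.mul_apply]; ring))
    refine h3.congr_fderiv ?_
    ext w
    simp
    ring
  have hBeq : HasFDerivAt (fun q : EuclideanSpace ℝ (Fin 2) => (q 0)^2+(q 1)^2)
      ((2 * p 0) • EuclideanSpace.proj (𝕜 := ℝ) (0 : Fin 2) + (2 * p 1) • EuclideanSpace.proj (𝕜 := ℝ) (1 : Fin 2)) p := by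
    have h1 := hproj0.mul hproj0
    have h2 := hproj1.mul hproj1
    have h3 := (h1.add h2).congr_of_eventuallyEq
      (f₁ := fun q : EuclideanSpace ℝ (Fin 2) => (q 0)^2+(q 1)^2)
      (Filter.Eventually.of_forall (fun q => by simp only [Pi.add_apply, Pi.mul_apply]; ring))
    refine h3.congr_fderiv ?_
    ext w
    simp
    ring
  have hr := hAeq.rpow_const (p := lam) (Or.inl hA.ne')
  have hmul := hr.mul hBeq
  have hWd : HasFDerivAt W _ p :=
    (hmul.congr_of_eventuallyEq (by filter_upwards with q using (hW q)))
  rw [hasGradientAt_iff_hasFDerivAt]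
  refine hWd.congr_fderiv ?_
  ext w
  simp [PiLp.inner_apply, Fin.sum_univ_two, mul_comm]
  have hpow : (2*(p 0)^2+(p 1)^2) ^ lam = (2*(p 0)^2+(p 1)^2) ^ (lam-1) * (2*(p 0)^2+(p 1)^2) := by
    rw [← Real.rpow_add_one hA.ne']
    ring_nf
  rw [hpow]
  ring

/-- For `λ > 0` and `θ ∈ (0, π)`, let `f_θ` be the rotation by angle `θ` of the
vector field `f₀(x,y) = (−2λy(x²+y²) − 2y(2x²+y²), 4λx(x²+y²) + 2x(2x²+y²))`. Then
`W(x,y) = (2x²+y²)^λ (x²+y²)` satisfies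
`⟨∇W(x,y), f_θ(x,y)⟩ = −sin(θ)·(2x²+y²)^{λ−1}·(f₀₁² + f₀₂²) < 0` for all `(x,y) ≠ (0,0)`;
in particular `W` is positive definite with negative definite derivative along `f_θ`,
proving asymptotic stability of the homogeneous cubic vector field `f_θ`. -/
theorem lyapunov_for_rotated_bacciotti_rosier_field
    (lam θ : ℝ) (hlam : 0 < lam) (hθ : θ ∈ Set.Ioo 0 π)
    (f₀ fθ : EuclideanSpace ℝ (Fin 2) → EuclideanSpace ℝ (Fin 2))
    (hf₀1 : ∀ p : EuclideanSpace ℝ (Fin 2),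
      f₀ p 0 = -2*lam*(p 1)*((p 0)^2+(p 1)^2) - 2*(p 1)*(2*(p 0)^2+(p 1)^2))
    (hf₀2 : ∀ p : EuclideanSpace ℝ (Fin 2),
      f₀ p 1 = 4*lam*(p 0)*((p 0)^2+(p 1)^2) + 2*(p 0)*(2*(p 0)^2+(p 1)^2))
    (hfθ1 : ∀ p : EuclideanSpace ℝ (Fin 2), fθ p 0 = cos θ * f₀ p 0 - sin θ * f₀ p 1)
    (hfθ2 : ∀ p : EuclideanSpace ℝ (Fin 2), fθ p 1 = sin θ * f₀ p 0 + cos θ * f₀ p 1)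
    (W : EuclideanSpace ℝ (Fin 2) → ℝ)
    (hW : ∀ p : EuclideanSpace ℝ (Fin 2),
      W p = (2*(p 0)^2+(p 1)^2) ^ lam * ((p 0)^2+(p 1)^2)) :
    (∀ p : EuclideanSpace ℝ (Fin 2), p ≠ 0 →
      ⟪gradient W p, fθ p⟫
        = -sin θ * (2*(p 0)^2+(p 1)^2) ^ (lam - 1) * ((f₀ p 0)^2 + (f₀ p 1)^2)) ∧
    (∀ p : EuclideanSpace ℝ (Fin 2), p ≠ 0 → ⟪gradient W p, fθ p⟫ < 0) ∧
    (W 0 = 0 ∧ ∀ p : EuclideanSpace ℝ (Fin 2), p ≠ 0 → 0 < W p) := by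
  have hsin : 0 < sin θ := Real.sin_pos_of_pos_of_lt_pi hθ.1 hθ.2
  have hx0 : ∀ p : EuclideanSpace ℝ (Fin 2), p ≠ 0 → (p 0 ≠ 0 ∨ p 1 ≠ 0) := by
    intro p hp
    by_contra h
    push_neg at h
    exact hp (by ext i; fin_cases i <;> simp [h.1, h.2])
  have hApos : ∀ p : EuclideanSpace ℝ (Fin 2), p ≠ 0 → 0 < 2*(p 0)^2+(p 1)^2 := by
    intro p hp; rcases hx0 p hp with h | h <;> positivity
  have hBpos : ∀ p : EuclideanSpace ℝ (Fin 2), p ≠ 0 → 0 < (p 0)^2+(p 1)^2 := by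
    intro p hp; rcases hx0 p hp with h | h <;> positivity
  have key : ∀ p : EuclideanSpace ℝ (Fin 2), p ≠ 0 →
      ⟪gradient W p, fθ p⟫
        = -sin θ * (2*(p 0)^2+(p 1)^2) ^ (lam - 1) * ((f₀ p 0)^2 + (f₀ p 1)^2) := by
    intro p hp
    have hg := (grad_aux lam W hW p hp).gradient
    rw [hg]
    rw [PiLp.inner_apply]
    simp only [Fin.sum_univ_two, RCLike.inner_apply, conj_trivial,
      Matrix.cons_val_zero, Matrix.cons_val_one, Matrix.head_cons]
    rw [hfθ1 p, hfθ2 p, hf₀1 p, hf₀2 p]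
    ring
  refine ⟨key, ?_, ?_, ?_⟩
  · intro p hp
    rw [key p hp]
    have hc : 0 < (2*(p 0)^2+(p 1)^2) ^ (lam - 1) := Real.rpow_pos_of_pos (hApos p hp) _
    have hf : 0 < (f₀ p 0)^2 + (f₀ p 1)^2 := by
      rcases hx0 p hp with h | h
      · have : f₀ p 1 ≠ 0 := by
          rw [hf₀2 p]
          have h1 : 0 < 4*lam*((p 0)^2+(p 1)^2) + 2*(2*(p 0)^2+(p 1)^2) := by
            have := hApos p hp; have := hBpos p hp; nlinarith
          intro hcon
          apply h
          have : p 0 * (4*lam*((p 0)^2+(p 1)^2) + 2*(2*(p 0)^2+(p 1)^2)) = 0 := by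
            rw [← hcon]; ring
          rcases mul_eq_zero.1 this with h' | h'
          · exact h'
          · exact absurd h' h1.ne'
        positivity
      · have : f₀ p 0 ≠ 0 := by
          rw [hf₀1 p]
          have h1 : 0 < 2*lam*((p 0)^2+(p 1)^2) + 2*(2*(p 0)^2+(p 1)^2) := by
            have := hApos p hp; have := hBpos p hp; nlinarith
          intro hcon
          apply h
          have : p 1 * (2*lam*((p 0)^2+(p 1)^2) + 2*(2*(p 0)^2+(p 1)^2)) = 0 := by
            linear_combination -hcon
          rcases mul_eq_zero.1 this with h' | h'
          · exact h'
          · exact absurd h' h1.ne'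
        positivity
    nlinarith [mul_pos hc hf, mul_pos hsin (mul_pos hc hf)]
  · rw [hW 0]
    simp
  · intro p hp
    rw [hW p]
    exact mul_pos (Real.rpow_pos_of_pos (hApos p hp) _) (hBpos p hp)
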